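/- The point (0,5) is a local minimizer of φ on F: there exists ε > 0 such that every x ∈ F with ‖x − (0,5)‖ < ε satisfies φ(x) ≥ φ(0,5) = 10. -/
import Mathlib


/-- The feasible set of the academic example. -/
def Facad : Set (ℝ × ℝ) :=
  {x | 0 ≤ x.1 ∧ 0 ≤ x.2 ∧ 0 ≤ (x.1 + x.2 - 5 * Real.sqrt 2) * x.1 ∧
    0 ≤ (x.1 + x.2 - 5) * x.2}

/-- `(0,5)` is a local minimizer of `φ(x) = 4x₁ + 2x₂` on `F`, with
`φ(0,5) = 10`. -/
theorem academic_local_min :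
    (4 * (0 : ℝ) + 2 * (5 : ℝ) = 10) ∧
    ∃ ε > (0 : ℝ), ∀ x ∈ Facad, ‖x - ((0 : ℝ), (5 : ℝ))‖ < ε →
      4 * (0 : ℝ) + 2 * (5 : ℝ) ≤ 4 * x.1 + 2 * x.2 := by
  refine ⟨by norm_num, 1, one_pos, ?_⟩
  rintro x ⟨h1, h2, h3, h4⟩ hx
  have hs : |x.2 - 5| < 1 := by
    have := norm_snd_le (x - ((0 : ℝ), (5 : ℝ)))
    simp only [Prod.snd_sub, Real.norm_eq_abs] at this
    linarith
  have hx2 : 4 < x.2 := by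
    cases abs_lt.mp hs; linarith
  have h5 : 0 ≤ x.1 + x.2 - 5 := nonneg_of_mul_nonneg_left h4 (by linarith)
  linarith
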